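/- Let $\mathcal{F}$ be a two-universal hash family of functions $f : \mathcal{R} \to \mathcal{S}$, let $P$ be a probability distribution on the finite set $\mathcal{R}$, and let $\alpha > 0$. Define $\Delta_f = \sum_{s \in \mathcal{S}} |P(f^{-1}(s)) - 1/|\mathcal{S}||$. Then $\mathbb{E}_F[\Delta_F] \le \sqrt{|\mathcal{S}| \cdot 2^{-\alpha}} + 2\, P(\{r : P(r) > 2^{-\alpha}\})$, where $F$ is uniform on $\mathcal{F}$. -/

import Mathlib

open Finset Real

/-- Leftover hash lemma with smoothing: for a two-universal family `h : F → (R → S)`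
and a distribution `P` on `R`,
`E_F[Δ_F] ≤ √(|S|·2^{-α}) + 2 P({r | P r > 2^{-α}})`, where
`Δ_f = ∑_s |P(f⁻¹(s)) - 1/|S||`. -/
theorem stmt5 {F R S : Type*} [Fintype F] [Nonempty F] [Fintype R] [Fintype S]
    [Nonempty S] [DecidableEq S]
    (h : F → R → S)
    (huniv : ∀ r r' : R, r ≠ r' →
      (({f : F | h f r = h f r'} : Finset F).card : ℝ) / (Fintype.card F : ℝ)
        ≤ 1 / (Fintype.card S : ℝ))
    (P : R → ℝ) (hP0 : ∀ r, 0 ≤ P r) (hP1 : ∑ r, P r = 1)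
    (α : ℝ) (hα : 0 < α)
    (B : Finset R) (hB : ∀ r, r ∈ B ↔ 2 ^ (-α) < P r)
    (Δ : F → ℝ)
    (hΔ : ∀ f, Δ f = ∑ s : S,
      |(∑ r ∈ {r : R | h f r = s}, P r) - 1 / (Fintype.card S : ℝ)|) :
    (1 / (Fintype.card F : ℝ)) * ∑ f : F, Δ f
      ≤ Real.sqrt ((Fintype.card S : ℝ) * 2 ^ (-α)) + 2 * ∑ r ∈ B, P r := by
  classical
  set m : ℝ := (Fintype.card S : ℝ) with hm
  set n : ℝ := (Fintype.card F : ℝ) with hn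
  have hm0 : (0:ℝ) < m := by
    simp only [hm, Nat.cast_pos]; exact Fintype.card_pos
  have hn0 : (0:ℝ) < n := by
    simp only [hn, Nat.cast_pos]; exact Fintype.card_pos
  set A : Finset R := Bᶜ with hA
  have hAle : ∀ r ∈ A, P r ≤ 2 ^ (-α) := by
    intro r hr
    have hrB : r ∉ B := by simpa [hA] using hr
    have := (hB r).not.mp hrB
    linarith [not_lt.mp this]
  set q : ℝ := ∑ r ∈ A, P r with hq
  set β : ℝ := ∑ r ∈ B, P r with hβ
  have hqβ : q + β = 1 := by
    rw [hq, hβ, hA, Finset.sum_compl_add_sum, hP1]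
  have hβ0 : 0 ≤ β := Finset.sum_nonneg fun r _ => hP0 r
  have hq0 : 0 ≤ q := Finset.sum_nonneg fun r _ => hP0 r
  set x : F → S → ℝ := fun f s => ∑ r ∈ A.filter (fun r => h f r = s), P r with hx
  set V : F → ℝ := fun f => ∑ s : S, (x f s - q / m) ^ 2 with hV
  have hsumx : ∀ f, ∑ s : S, x f s = q := fun f => Finset.sum_fiberwise A (h f) P
  -- Step 1 : Δ f ≤ ∑_s |x f s - q/m| + 2β
  have step1 : ∀ f, Δ f ≤ (∑ s : S, |x f s - q / m|) + 2 * β := by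
    intro f
    rw [hΔ]
    have hsplit : ∀ s : S, (∑ r ∈ ({r : R | h f r = s} : Finset R), P r)
        = x f s + ∑ r ∈ B.filter (fun r => h f r = s), P r := by
      intro s
      simp only [hx, hA, Finset.sum_filter]
      rw [Finset.sum_compl_add_sum]
    have hsumy : ∑ s : S, ∑ r ∈ B.filter (fun r => h f r = s), P r = β :=
      Finset.sum_fiberwise B (h f) P
    calc ∑ s : S, |(∑ r ∈ ({r : R | h f r = s} : Finset R), P r) - 1 / m|
        ≤ ∑ s : S, (|x f s - q / m| + ((∑ r ∈ B.filter (fun r => h f r = s), P r) + β / m)) := by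
          refine Finset.sum_le_sum fun s _ => ?_
          rw [hsplit s]
          have h1m : 1 / m = q / m + β / m := by
            rw [← add_div, hqβ]
          rw [h1m]
          have hy0 : 0 ≤ ∑ r ∈ B.filter (fun r => h f r = s), P r :=
            Finset.sum_nonneg fun r _ => hP0 r
          have habs : |x f s + (∑ r ∈ B.filter (fun r => h f r = s), P r) - (q / m + β / m)|
              ≤ |x f s - q / m| + |(∑ r ∈ B.filter (fun r => h f r = s), P r) - β / m| := by
            have he : x f s + (∑ r ∈ B.filter (fun r => h f r = s), P r) - (q / m + β / m)
                = (x f s - q / m) + ((∑ r ∈ B.filter (fun r => h f r = s), P r) - β / m) := by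
              ring
            rw [he]; exact abs_add_le _ _
          refine habs.trans ?_
          have : |(∑ r ∈ B.filter (fun r => h f r = s), P r) - β / m|
              ≤ (∑ r ∈ B.filter (fun r => h f r = s), P r) + β / m := by
            have hb : 0 ≤ β / m := div_nonneg hβ0 hm0.le
            rw [abs_sub_le_iff]
            constructor <;> linarith
          linarith
      _ = (∑ s : S, |x f s - q / m|) + 2 * β := by
          rw [Finset.sum_add_distrib, Finset.sum_add_distrib, hsumy, Finset.sum_const,
            Finset.card_univ, nsmul_eq_mul]
          have he : (Fintype.card S : ℝ) * (β / m) = β := by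
            rw [← hm]; field_simp
          rw [he]; ring
  -- Step 2 : ∑_s |x f s - q/m| ≤ √m * √(V f)
  have step2 : ∀ f, (∑ s : S, |x f s - q / m|) ≤ Real.sqrt m * Real.sqrt (V f) := by
    intro f
    have hcs := Finset.sum_mul_sq_le_sq_mul_sq Finset.univ (fun _ => (1:ℝ))
      (fun s => |x f s - q / m|)
    simp only [one_mul, one_pow, sq_abs] at hcs
    have hsum1 : ∑ _s : S, (1:ℝ) = m := by
      rw [Finset.sum_const, Finset.card_univ, nsmul_eq_mul, mul_one, hm]
    rw [hsum1] at hcs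
    have hnn : 0 ≤ ∑ s : S, |x f s - q / m| :=
      Finset.sum_nonneg fun s _ => abs_nonneg _
    have h2 := Real.sqrt_le_sqrt hcs
    rwa [Real.sqrt_sq hnn, Real.sqrt_mul hm0.le] at h2
  -- Step 3 : Jensen via Cauchy-Schwarz
  have hVnn : ∀ f, 0 ≤ V f := fun f => Finset.sum_nonneg fun s _ => sq_nonneg _
  have hsumVnn : 0 ≤ ∑ f : F, V f := Finset.sum_nonneg fun f _ => hVnn f
  have step3 : (1 / n) * ∑ f : F, Real.sqrt (V f)
      ≤ Real.sqrt ((1 / n) * ∑ f : F, V f) := by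
    have hcs := Finset.sum_mul_sq_le_sq_mul_sq Finset.univ (fun _ => (1:ℝ))
      (fun f => Real.sqrt (V f))
    simp only [one_mul, one_pow] at hcs
    have hrw : ∑ f : F, Real.sqrt (V f) ^ 2 = ∑ f : F, V f :=
      Finset.sum_congr rfl fun f _ => Real.sq_sqrt (hVnn f)
    have hsum1 : ∑ _f : F, (1:ℝ) = n := by
      rw [Finset.sum_const, Finset.card_univ, nsmul_eq_mul, mul_one, hn]
    rw [hrw, hsum1] at hcs
    have hnn : 0 ≤ ∑ f : F, Real.sqrt (V f) :=
      Finset.sum_nonneg fun f _ => Real.sqrt_nonneg _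
    have h1 := Real.sqrt_le_sqrt hcs
    rw [Real.sqrt_sq hnn] at h1
    calc (1 / n) * ∑ f : F, Real.sqrt (V f) ≤ (1 / n) * Real.sqrt (n * ∑ f : F, V f) := by
          apply mul_le_mul_of_nonneg_left h1
          positivity
      _ = Real.sqrt ((1 / n) * ∑ f : F, V f) := by
          rw [show (1/n) * Real.sqrt (n * ∑ f : F, V f)
              = Real.sqrt ((1/n)^2) * Real.sqrt (n * ∑ f : F, V f) by
            rw [Real.sqrt_sq (by positivity)]]
          rw [← Real.sqrt_mul (by positivity)]
          congr 1
          field_simp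
  -- key expansion of ∑_s x²
  have key : ∀ f, ∑ s : S, (x f s) ^ 2
      = ∑ r ∈ A, ∑ r' ∈ A, if h f r = h f r' then P r * P r' else 0 := by
    intro f
    have e1 : ∀ s : S, (x f s) ^ 2 = ∑ r ∈ A, ∑ r' ∈ A,
        (if h f r = s then P r else 0) * (if h f r' = s then P r' else 0) := by
      intro s
      rw [hx]
      simp only [Finset.sum_filter]
      rw [sq, Finset.sum_mul_sum]
    calc ∑ s : S, (x f s) ^ 2
        = ∑ s : S, ∑ r ∈ A, ∑ r' ∈ A,
            (if h f r = s then P r else 0) * (if h f r' = s then P r' else 0) :=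
          Finset.sum_congr rfl fun s _ => e1 s
      _ = ∑ r ∈ A, ∑ r' ∈ A, ∑ s : S,
            (if h f r = s then P r else 0) * (if h f r' = s then P r' else 0) := by
          rw [Finset.sum_comm]
          exact Finset.sum_congr rfl fun r _ => Finset.sum_comm
      _ = ∑ r ∈ A, ∑ r' ∈ A, if h f r = h f r' then P r * P r' else 0 := by
          refine Finset.sum_congr rfl fun r _ => Finset.sum_congr rfl fun r' _ => ?_
          simp only [ite_mul, zero_mul, mul_ite, mul_zero]
          rw [Finset.sum_ite_eq]
          simp [eq_comm]
  -- Step 4 : (1/n) ∑_f V f ≤ 2^{-α}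
  have step4 : (1 / n) * ∑ f : F, V f ≤ 2 ^ (-α) := by
    set T : ℝ := ∑ r ∈ A, P r ^ 2 with hT
    have hT0 : 0 ≤ T := Finset.sum_nonneg fun r _ => sq_nonneg _
    have hq1 : q ≤ 1 := by linarith
    have hTle : T ≤ 2 ^ (-α) := by
      calc T ≤ ∑ r ∈ A, 2 ^ (-α) * P r := by
            refine Finset.sum_le_sum fun r hr => ?_
            rw [sq]
            exact mul_le_mul_of_nonneg_right (hAle r hr) (hP0 r)
        _ = 2 ^ (-α) * q := by rw [← Finset.mul_sum]
        _ ≤ 2 ^ (-α) := by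
            nlinarith [Real.rpow_pos_of_pos (by norm_num : (0:ℝ) < 2) (-α)]
    have hcount : ∀ r r' : R, r ≠ r' →
        (∑ f : F, if h f r = h f r' then (1:ℝ) else 0) ≤ n / m := by
      intro r r' hne
      have h1 := huniv r r' hne
      have h2 : (∑ f : F, if h f r = h f r' then (1:ℝ) else 0)
          = (({f : F | h f r = h f r'} : Finset F).card : ℝ) := by
        simp [Finset.sum_boole]
      rw [h2]
      rw [div_le_div_iff₀ hn0 hm0] at h1
      rw [le_div_iff₀ hm0]
      linarith
    have hdiag : ∀ r : R, (∑ f : F, if h f r = h f r then (1:ℝ) else 0) = n := by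
      intro r; simp [hn, Finset.card_univ]
    have herase : ∀ r ∈ A, ∑ r' ∈ A.erase r, P r' = q - P r := by
      intro r hr
      have := Finset.sum_erase_add A P hr
      rw [← hq] at this
      linarith
    have hmain : ∑ f : F, ∑ s : S, x f s ^ 2 ≤ n * T + (n / m) * (q ^ 2 - T) := by
      calc ∑ f : F, ∑ s : S, x f s ^ 2
          = ∑ f : F, ∑ r ∈ A, ∑ r' ∈ A, if h f r = h f r' then P r * P r' else 0 :=
            Finset.sum_congr rfl fun f _ => key f
        _ = ∑ r ∈ A, ∑ r' ∈ A, ∑ f : F, if h f r = h f r' then P r * P r' else 0 := by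
            rw [Finset.sum_comm]
            exact Finset.sum_congr rfl fun r _ => Finset.sum_comm
        _ = ∑ r ∈ A, ∑ r' ∈ A,
              P r * P r' * ∑ f : F, if h f r = h f r' then (1:ℝ) else 0 := by
            refine Finset.sum_congr rfl fun r _ => Finset.sum_congr rfl fun r' _ => ?_
            rw [Finset.mul_sum]
            exact Finset.sum_congr rfl fun f _ => by split <;> simp
        _ ≤ ∑ r ∈ A, ((n / m) * (P r * (q - P r)) + P r ^ 2 * n) := by
            refine Finset.sum_le_sum fun r hr => ?_
            rw [← Finset.sum_erase_add A _ hr]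
            have hb1 : ∑ r' ∈ A.erase r,
                P r * P r' * ∑ f : F, (if h f r = h f r' then (1:ℝ) else 0)
                ≤ (n / m) * (P r * (q - P r)) := by
              calc ∑ r' ∈ A.erase r,
                  P r * P r' * ∑ f : F, (if h f r = h f r' then (1:ℝ) else 0)
                  ≤ ∑ r' ∈ A.erase r, P r * P r' * (n / m) := by
                    refine Finset.sum_le_sum fun r' hr' => ?_
                    have hne : r ≠ r' := (Finset.ne_of_mem_erase hr').symm
                    exact mul_le_mul_of_nonneg_left (hcount r r' hne)
                      (mul_nonneg (hP0 r) (hP0 r'))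
                _ = (n / m) * (P r * (q - P r)) := by
                    rw [← herase r hr]
                    rw [Finset.mul_sum, Finset.mul_sum]
                    exact Finset.sum_congr rfl fun r' _ => by ring
            have hb2 : P r * P r * ∑ f : F, (if h f r = h f r then (1:ℝ) else 0)
                = P r ^ 2 * n := by
              rw [hdiag r]; ring
            rw [hb2]
            linarith
        _ = n * T + (n / m) * (q ^ 2 - T) := by
            rw [Finset.sum_add_distrib, ← Finset.sum_mul, ← hT, ← Finset.mul_sum]
            have he : ∑ r ∈ A, P r * (q - P r) = q ^ 2 - T := by
              have : ∑ r ∈ A, P r * (q - P r) = (∑ r ∈ A, P r * q) - ∑ r ∈ A, P r ^ 2 := by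
                rw [← Finset.sum_sub_distrib]
                exact Finset.sum_congr rfl fun r _ => by ring
              rw [this, ← Finset.sum_mul, ← hq, ← hT, sq]
            rw [he]; ring
    have hVf : ∀ f, V f = (∑ s : S, x f s ^ 2) - q ^ 2 / m := by
      intro f
      simp only [hV]
      have he : ∀ s : S, (x f s - q / m) ^ 2
          = x f s ^ 2 - 2 * (q / m) * x f s + (q / m) ^ 2 := fun s => by ring
      rw [Finset.sum_congr rfl fun s _ => he s, Finset.sum_add_distrib,
        Finset.sum_sub_distrib, ← Finset.mul_sum, hsumx, Finset.sum_const,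
        Finset.card_univ, nsmul_eq_mul, ← hm]
      field_simp
      ring
    have hsumV : ∑ f : F, V f = (∑ f : F, ∑ s : S, x f s ^ 2) - n * (q ^ 2 / m) := by
      rw [Finset.sum_congr rfl fun f _ => hVf f, Finset.sum_sub_distrib, Finset.sum_const,
        Finset.card_univ, nsmul_eq_mul, ← hn]
    calc (1 / n) * ∑ f : F, V f
        ≤ (1 / n) * ((n * T + (n / m) * (q ^ 2 - T)) - n * (q ^ 2 / m)) := by
          apply mul_le_mul_of_nonneg_left _ (by positivity : (0:ℝ) ≤ 1 / n)
          rw [hsumV]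
          linarith [hmain]
      _ = T - T / m := by field_simp; ring
      _ ≤ T := by
          have : 0 ≤ T / m := div_nonneg hT0 hm0.le
          linarith
      _ ≤ 2 ^ (-α) := hTle
  -- Final assembly
  calc (1 / n) * ∑ f : F, Δ f
      ≤ (1 / n) * ∑ f : F, (Real.sqrt m * Real.sqrt (V f) + 2 * β) := by
        apply mul_le_mul_of_nonneg_left _ (by positivity : (0:ℝ) ≤ 1 / n)
        exact Finset.sum_le_sum fun f _ => (step1 f).trans (by linarith [step2 f])
    _ = Real.sqrt m * ((1 / n) * ∑ f : F, Real.sqrt (V f)) + 2 * β := by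
        rw [Finset.sum_add_distrib, Finset.sum_const, Finset.card_univ, nsmul_eq_mul, ← hn, ← Finset.mul_sum]
        field_simp
    _ ≤ Real.sqrt m * Real.sqrt ((1 / n) * ∑ f : F, V f) + 2 * β :=
        add_le_add_left (mul_le_mul_of_nonneg_left step3 (Real.sqrt_nonneg m)) _
    _ ≤ Real.sqrt m * Real.sqrt (2 ^ (-α)) + 2 * β :=
        add_le_add_left (mul_le_mul_of_nonneg_left (Real.sqrt_le_sqrt step4)
          (Real.sqrt_nonneg m)) _
    _ = Real.sqrt (m * 2 ^ (-α)) + 2 * β := by rw [← Real.sqrt_mul hm0.le]
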